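/- Let D = {z ∈ ℂ : |z + 1| < 1}, let ω̄(0), ω̄(1), … ∈ [0,1] satisfy ∑_{s=0}^∞ ω̄(s) = ∞, and define f_t(z) = ∏_{s=0}^{t} (1 + ω̄(s)·z). Then: (i) f_t → 0 uniformly on every compact subset of D as t → ∞; and (ii) for every j ≥ 0 and every x ∈ D, the j-th derivative satisfies f_t^{(j)}(x) → 0 as t → ∞. -/

import Mathlib

open Filter Topology

/-- With `f_t(z) = ∏_{s=0}^t (1 + ω̄(s) z)`, `ω̄(s) ∈ [0,1]` and
`∑ₛ ω̄(s) = ∞`: (i) `f_t → 0` uniformly on compact subsets of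
`D = {z : |z + 1| < 1}`; (ii) every derivative `f_t⁽ʲ⁾(x) → 0` for `x ∈ D`. -/
theorem product_polys_tendsto_zero_locally_uniformly
    (w : ℕ → ℝ) (hw : ∀ s, w s ∈ Set.Icc (0 : ℝ) 1)
    (hdiv : Tendsto (fun T => ∑ s ∈ Finset.range T, w s) atTop atTop)
    (f : ℕ → ℂ → ℂ)
    (hf : ∀ t z, f t z = ∏ s ∈ Finset.range (t + 1), (1 + (w s : ℂ) * z)) :
    (∀ K : Set ℂ, K ⊆ {z : ℂ | ‖z + 1‖ < 1} → IsCompact K →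
      TendstoUniformlyOn f 0 atTop K) ∧
    (∀ (j : ℕ) (x : ℂ), ‖x + 1‖ < 1 →
      Tendsto (fun t => iteratedDeriv j (f t) x) atTop (𝓝 0)) := by
  have hdiff : ∀ t, Differentiable ℂ (f t) := by
    intro t
    have : f t = fun z => ∏ s ∈ Finset.range (t + 1), (1 + (w s : ℂ) * z) :=
      funext (hf t)
    rw [this]
    fun_prop
  have part1 : ∀ K : Set ℂ, K ⊆ {z : ℂ | ‖z + 1‖ < 1} → IsCompact K →
      TendstoUniformlyOn f 0 atTop K := by
    intro K hKD hK
    rcases K.eq_empty_or_nonempty with rfl | hne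
    · simp [TendstoUniformlyOn]
    · obtain ⟨z₀, hz₀K, hz₀⟩ := hK.exists_isMaxOn hne
        ((continuous_norm.comp (continuous_id.add continuous_const)).continuousOn)
      set r := ‖z₀ + 1‖ with hr
      have hr1 : r < 1 := hKD hz₀K
      have hr0 : 0 ≤ r := norm_nonneg _
      have hle : ∀ z ∈ K, ‖z + 1‖ ≤ r := fun z hz => hz₀ hz
      -- key pointwise bound
      have key : ∀ t, ∀ z ∈ K,
          ‖f t z‖ ≤ Real.exp (-((1 - r) * ∑ s ∈ Finset.range (t + 1), w s)) := by
        intro t z hz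
        have h1 : ‖f t z‖
            ≤ ∏ s ∈ Finset.range (t + 1), (1 - w s * (1 - r)) := by
          rw [hf, norm_prod]
          refine Finset.prod_le_prod (fun s _ => norm_nonneg _) ?_
          intro s _
          have hws := hw s
          have : (1 : ℂ) + (w s : ℂ) * z = ((1 - w s : ℝ) : ℂ) + (w s : ℂ) * (z + 1) := by
            push_cast; ring
          rw [this]
          calc ‖((1 - w s : ℝ) : ℂ) + (w s : ℂ) * (z + 1)‖
              ≤ ‖((1 - w s : ℝ) : ℂ)‖ + ‖(w s : ℂ) * (z + 1)‖ :=
                norm_add_le _ _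
            _ = |1 - w s| + |w s| * ‖z + 1‖ := by
                rw [norm_mul, Complex.norm_real, Complex.norm_real, Real.norm_eq_abs, Real.norm_eq_abs]
            _ ≤ (1 - w s) + w s * r := by
                rw [abs_of_nonneg (by linarith [hws.2]), abs_of_nonneg hws.1]
                have := hle z hz
                nlinarith [hws.1]
            _ = 1 - w s * (1 - r) := by ring
        have h2 : ∏ s ∈ Finset.range (t + 1), (1 - w s * (1 - r))
            ≤ ∏ s ∈ Finset.range (t + 1), Real.exp (-(w s * (1 - r))) := by
          refine Finset.prod_le_prod (fun s _ => ?_) (fun s _ => ?_)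
          · have hws := hw s; nlinarith [hws.1, hws.2]
          · have := Real.add_one_le_exp (-(w s * (1 - r))); linarith
        have h3 : ∏ s ∈ Finset.range (t + 1), Real.exp (-(w s * (1 - r)))
            = Real.exp (-((1 - r) * ∑ s ∈ Finset.range (t + 1), w s)) := by
          rw [← Real.exp_sum]
          congr 1
          rw [Finset.mul_sum, ← Finset.sum_neg_distrib]
          · exact Finset.sum_congr rfl fun s _ => by ring
        calc ‖f t z‖ ≤ _ := h1
          _ ≤ _ := h2
          _ = _ := h3
      have hE : Tendsto (fun t =>
          Real.exp (-((1 - r) * ∑ s ∈ Finset.range (t + 1), w s))) atTop (𝓝 0) := by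
        apply Real.tendsto_exp_atBot.comp
        apply tendsto_neg_atTop_atBot.comp
        have hS : Tendsto (fun t => ∑ s ∈ Finset.range (t + 1), w s) atTop atTop :=
          hdiv.comp (tendsto_add_atTop_nat 1)
        exact hS.const_mul_atTop (by linarith)
      rw [Metric.tendstoUniformlyOn_iff]
      intro ε hε
      filter_upwards [hE.eventually (gt_mem_nhds hε)] with t ht z hz
      have := key t z hz
      simp only [Pi.zero_apply, dist_comm, Complex.dist_eq, sub_zero]
      exact lt_of_le_of_lt this ht
  refine ⟨part1, ?_⟩
  have hD : IsOpen {z : ℂ | ‖z + 1‖ < 1} :=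
    isOpen_lt (continuous_norm.comp (continuous_id.add continuous_const))
      continuous_const
  have hloc : ∀ j : ℕ, TendstoLocallyUniformlyOn (fun t => iteratedDeriv j (f t)) 0 atTop
      {z : ℂ | ‖z + 1‖ < 1} := by
    intro j
    induction j with
    | zero =>
      simpa [iteratedDeriv_zero] using
        (tendstoLocallyUniformlyOn_iff_forall_isCompact hD).2
          (fun K hK hKc => part1 K hK hKc)
    | succ n ih =>
      have hdiffn : ∀ t, Differentiable ℂ (iteratedDeriv n (f t)) := fun t =>
        ((hdiff t).contDiff : ContDiff ℂ ⊤ (f t)).differentiable_iteratedDeriv n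
          (by simp)
      have := ih.deriv (Eventually.of_forall fun t => (hdiffn t).differentiableOn) hD
      have h0 : deriv (0 : ℂ → ℂ) = 0 := by
        funext z; rw [Pi.zero_def, deriv_const']
      rw [h0] at this
      convert this using 1
      funext t; rw [iteratedDeriv_succ]; rfl
  intro j x hx
  have := (hloc j).tendsto_at hx
  simpa using this
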